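/- (Theorem 8, first estimate) For all real numbers a and b, |S_a − S_b| ≤ (S_{a+b−1/2} · S_{a−b+1/2})^{1/2}, where S_a := K_a(p‖q) + K_a(q‖p) − 4H². -/

import Mathlib

open Real intervalIntegral

/-- The relative divergence of type `s`, `K_s(p‖q)`. -/
noncomputable def relDiv {ι : Type*} (p q : ι → ℝ) (s : ℝ) : ℝ :=
  if s = 0 then ∑' i, q i * Real.log (q i / p i)
  else if s = 1 then ∑' i, p i * Real.log (p i / q i)
  else ((∑' i, p i ^ s * q i ^ (1 - s)) - 1) / (s * (s - 1))

/-- The squared Hellinger distance `H²(p,q)`. -/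
noncomputable def hellingerSq {ι : Type*} (p q : ι → ℝ) : ℝ :=
  ∑' i, (Real.sqrt (p i) - Real.sqrt (q i)) ^ 2

/-- `S_a := K_a(p‖q) + K_a(q‖p) - 4H²`. -/
noncomputable def symS {ι : Type*} (p q : ι → ℝ) (a : ℝ) : ℝ :=
  relDiv p q a + relDiv q p a - 4 * hellingerSq p q

noncomputable def gInt (γ T : ℝ) : ℝ :=
  ∫ s in (0:ℝ)..T, (Real.cosh (γ * s) - 1) * Real.sinh (T - s)

lemma gInt_neg (γ T : ℝ) : gInt (-γ) T = gInt γ T := by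
  unfold gInt
  congr 1
  ext s
  rw [neg_mul, Real.cosh_neg]

lemma gInt_nonneg (γ : ℝ) {T : ℝ} (hT : 0 ≤ T) : 0 ≤ gInt γ T := by
  apply intervalIntegral.integral_nonneg hT
  intro s hs
  have h1 : 0 ≤ Real.cosh (γ * s) - 1 := by linarith [Real.one_le_cosh (γ * s)]
  have h2 : 0 ≤ Real.sinh (T - s) := Real.sinh_nonneg_iff.2 (by linarith [hs.2])
  positivity

lemma gInt_eq (γ T : ℝ) (hγ : γ ^ 2 ≠ 1) :
    gInt γ T = (Real.cosh (γ * T) - Real.cosh T) / (γ ^ 2 - 1) - (Real.cosh T - 1) := by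
  have hne : γ ^ 2 - 1 ≠ 0 := sub_ne_zero.2 hγ
  have key : ∀ s : ℝ, HasDerivAt (fun s =>
      (γ * Real.sinh (γ * s) * Real.sinh (T - s) + Real.cosh (γ * s) * Real.cosh (T - s)) / (γ ^ 2 - 1)
        + Real.cosh (T - s))
      ((Real.cosh (γ * s) - 1) * Real.sinh (T - s)) s := by
    intro s
    have hs1 : HasDerivAt (fun s : ℝ => Real.sinh (γ * s)) (γ * Real.cosh (γ * s)) s := by
      simpa [mul_comm, Function.comp_def] using (Real.hasDerivAt_sinh (γ * s)).comp s ((hasDerivAt_id s).const_mul γ)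
    have hs2 : HasDerivAt (fun s : ℝ => Real.cosh (γ * s)) (γ * Real.sinh (γ * s)) s := by
      simpa [mul_comm, Function.comp_def] using (Real.hasDerivAt_cosh (γ * s)).comp s ((hasDerivAt_id s).const_mul γ)
    have hs3 : HasDerivAt (fun s : ℝ => Real.sinh (T - s)) (-Real.cosh (T - s)) s := by
      simpa [Function.comp_def] using (Real.hasDerivAt_sinh (T - s)).comp s ((hasDerivAt_id s).const_sub T)
    have hs4 : HasDerivAt (fun s : ℝ => Real.cosh (T - s)) (-Real.sinh (T - s)) s := by
      simpa [Function.comp_def] using (Real.hasDerivAt_cosh (T - s)).comp s ((hasDerivAt_id s).const_sub T)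
    have h := ((((hs1.const_mul γ).mul hs3).add (hs2.mul hs4)).div_const (γ ^ 2 - 1)).add hs4
    refine h.congr_deriv (Eq.symm ?_)
    field_simp
    ring
  have hcont : Continuous fun s => (Real.cosh (γ * s) - 1) * Real.sinh (T - s) := by
    continuity
  have := intervalIntegral.integral_eq_sub_of_hasDerivAt (f := fun s =>
      (γ * Real.sinh (γ * s) * Real.sinh (T - s) + Real.cosh (γ * s) * Real.cosh (T - s)) / (γ ^ 2 - 1)
        + Real.cosh (T - s))
    (fun s _ => key s) (hcont.intervalIntegrable 0 T)
  unfold gInt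
  rw [this]
  simp [Real.cosh_zero, Real.sinh_zero]
  field_simp
  ring

lemma gInt_one (T : ℝ) : gInt 1 T = T * Real.sinh T / 2 - (Real.cosh T - 1) := by
  have key : ∀ s : ℝ, HasDerivAt (fun s =>
      (s * Real.sinh T - Real.cosh (T - 2 * s) / 2) / 2 + Real.cosh (T - s))
      ((Real.cosh (1 * s) - 1) * Real.sinh (T - s)) s := by
    intro s
    have hs4 : HasDerivAt (fun s : ℝ => Real.cosh (T - s)) (-Real.sinh (T - s)) s := by
      simpa [Function.comp_def] using (Real.hasDerivAt_cosh (T - s)).comp s ((hasDerivAt_id s).const_sub T)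
    have hs5 : HasDerivAt (fun s : ℝ => Real.cosh (T - 2 * s)) (-2 * Real.sinh (T - 2 * s)) s := by
      have h2 : HasDerivAt (fun s : ℝ => T - 2 * s) (-2) s := by
        simpa using ((hasDerivAt_id s).const_mul 2).const_sub T
      simpa [mul_comm, Function.comp_def] using (Real.hasDerivAt_cosh (T - 2 * s)).comp s h2
    have hs6 : HasDerivAt (fun s : ℝ => s * Real.sinh T) (Real.sinh T) s := by
      simpa using (hasDerivAt_id s).mul_const (Real.sinh T)
    have h := (((hs6.sub (hs5.div_const 2)).div_const 2).add hs4)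
    refine h.congr_deriv (Eq.symm ?_)
    rw [show T - 2 * s = T - s - s by ring]
    simp only [one_mul, Real.sinh_sub, Real.cosh_sub]
    linear_combination (Real.sinh T / 2) * Real.cosh_sq_sub_sinh_sq s
  have hcont : Continuous fun s => (Real.cosh (1 * s) - 1) * Real.sinh (T - s) := by
    continuity
  have := intervalIntegral.integral_eq_sub_of_hasDerivAt (f := fun s =>
      (s * Real.sinh T - Real.cosh (T - 2 * s) / 2) / 2 + Real.cosh (T - s))
    (fun s _ => key s) (hcont.intervalIntegrable 0 T)
  unfold gInt
  rw [this]
  simp only [Real.cosh_zero, mul_zero, zero_mul, sub_zero, sub_self]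
  rw [show T - 2 * T = -T by ring, Real.cosh_neg]
  ring

lemma cosh_sub_cosh' (u v : ℝ) :
    Real.cosh u - Real.cosh v = 2 * Real.sinh ((u + v) / 2) * Real.sinh ((u - v) / 2) := by
  calc Real.cosh u - Real.cosh v
      = Real.cosh ((u+v)/2 + (u-v)/2) - Real.cosh ((u+v)/2 - (u-v)/2) := by ring_nf
    _ = _ := by rw [Real.cosh_add, Real.cosh_sub]; ring

lemma cosh_sub_one (x : ℝ) : Real.cosh x - 1 = 2 * Real.sinh (x / 2) ^ 2 := by
  have := cosh_sub_cosh' x 0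
  simp only [Real.cosh_zero, add_zero, sub_zero] at this
  rw [this]; ring

lemma integral_cs {T : ℝ} (hT : 0 ≤ T) (f g h : ℝ → ℝ) (hf : Continuous f) (hg : Continuous g)
    (hh : Continuous h) (hhpos : ∀ s ∈ Set.Icc 0 T, 0 ≤ h s) :
    (∫ s in (0:ℝ)..T, f s * g s * h s) ^ 2 ≤
      (∫ s in (0:ℝ)..T, f s ^ 2 * h s) * (∫ s in (0:ℝ)..T, g s ^ 2 * h s) := by
  set A := ∫ s in (0:ℝ)..T, f s ^ 2 * h s with hA
  set B := ∫ s in (0:ℝ)..T, f s * g s * h s with hB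
  set C := ∫ s in (0:ℝ)..T, g s ^ 2 * h s with hC
  have key : ∀ l : ℝ, 0 ≤ C * (l * l) + (-2 * B) * l + A := by
    intro l
    have h0 : (0:ℝ) ≤ ∫ s in (0:ℝ)..T, (l * g s - f s) ^ 2 * h s := by
      apply intervalIntegral.integral_nonneg hT
      intro s hs
      exact mul_nonneg (sq_nonneg _) (hhpos s hs)
    have e : (fun s => (l * g s - f s) ^ 2 * h s) =
        fun s => l * l * (g s ^ 2 * h s) - 2 * l * (f s * g s * h s) + f s ^ 2 * h s := by
      ext s; ring
    rw [e] at h0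
    have i1 : IntervalIntegrable (fun s => g s ^ 2 * h s) MeasureTheory.volume 0 T :=
      (Continuous.intervalIntegrable (by fun_prop) 0 T)
    have i2 : IntervalIntegrable (fun s => f s * g s * h s) MeasureTheory.volume 0 T :=
      (Continuous.intervalIntegrable (by fun_prop) 0 T)
    have i3 : IntervalIntegrable (fun s => f s ^ 2 * h s) MeasureTheory.volume 0 T :=
      (Continuous.intervalIntegrable (by fun_prop) 0 T)
    rw [intervalIntegral.integral_add (((i1.const_mul _).sub (i2.const_mul _))) i3,
      intervalIntegral.integral_sub (i1.const_mul _) (i2.const_mul _),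
      intervalIntegral.integral_const_mul, intervalIntegral.integral_const_mul] at h0
    calc (0:ℝ) ≤ l * l * C - 2 * l * B + A := h0
      _ = C * (l * l) + (-2 * B) * l + A := by ring
  have hd := discrim_le_zero key
  rw [discrim] at hd
  nlinarith

lemma gInt_cs (α β : ℝ) {T : ℝ} (hT : 0 ≤ T) :
    |gInt α T - gInt β T| ≤ Real.sqrt (gInt (α + β) T) * Real.sqrt (gInt (α - β) T) := by
  have hsq : ∀ γ : ℝ, gInt γ T = ∫ s in (0:ℝ)..T,
      Real.sinh (γ * s / 2) ^ 2 * (2 * Real.sinh (T - s)) := by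
    intro γ
    unfold gInt
    congr 1; ext s
    rw [cosh_sub_one (γ * s)]
    ring
  have hdiff : gInt α T - gInt β T = ∫ s in (0:ℝ)..T,
      Real.sinh ((α + β) * s / 2) * Real.sinh ((α - β) * s / 2) * (2 * Real.sinh (T - s)) := by
    unfold gInt
    rw [← intervalIntegral.integral_sub (Continuous.intervalIntegrable (by fun_prop) 0 T)
      (Continuous.intervalIntegrable (by fun_prop) 0 T)]
    congr 1; ext s
    have e : Real.cosh (α * s) - Real.cosh (β * s) =
        2 * Real.sinh ((α + β) * s / 2) * Real.sinh ((α - β) * s / 2) := by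
      rw [cosh_sub_cosh' (α * s) (β * s)]
      ring_nf
    calc (Real.cosh (α * s) - 1) * Real.sinh (T - s) - (Real.cosh (β * s) - 1) * Real.sinh (T - s)
        = (Real.cosh (α * s) - Real.cosh (β * s)) * Real.sinh (T - s) := by ring
      _ = _ := by rw [e]; ring
  have hcs := integral_cs hT (fun s => Real.sinh ((α + β) * s / 2))
    (fun s => Real.sinh ((α - β) * s / 2)) (fun s => 2 * Real.sinh (T - s))
    (by fun_prop) (by fun_prop) (by fun_prop)
    (fun s hs => mul_nonneg zero_le_two (Real.sinh_nonneg_iff.2 (by linarith [hs.2])))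
  beta_reduce at hcs
  rw [hdiff, ← Real.sqrt_sq_eq_abs]
  refine le_trans (Real.sqrt_le_sqrt hcs) ?_
  rw [← hsq, ← hsq, Real.sqrt_mul (gInt_nonneg _ hT)]

lemma sqrt_eq_exp_real {x : ℝ} (hx : 0 < x) : Real.sqrt x = Real.exp (Real.log x / 2) := by
  rw [show Real.log x / 2 = Real.log x * (1/2 : ℝ) by ring, ← Real.rpow_def_of_pos hx,
    ← Real.sqrt_eq_rpow]

lemma point_mom {x y : ℝ} (hx : 0 < x) (hy : 0 < y) (a : ℝ) :
    x ^ a * y ^ (1 - a) + y ^ a * x ^ (1 - a)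
      = 2 * Real.sqrt (x * y) * Real.cosh ((2 * a - 1) * (|Real.log (x / y)| / 2)) := by
  have hL : Real.log (x / y) = Real.log x - Real.log y := Real.log_div hx.ne' hy.ne'
  have habs : Real.cosh ((2 * a - 1) * (|Real.log (x / y)| / 2))
      = Real.cosh ((2 * a - 1) * (Real.log (x / y) / 2)) := by
    rcases abs_cases (Real.log (x / y)) with ⟨h, _⟩ | ⟨h, _⟩
    · rw [h]
    · rw [h, show (2 * a - 1) * (-Real.log (x / y) / 2)
        = -((2 * a - 1) * (Real.log (x / y) / 2)) by ring, Real.cosh_neg]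
  rw [habs, hL, Real.sqrt_mul hx.le, sqrt_eq_exp_real hx, sqrt_eq_exp_real hy,
    Real.rpow_def_of_pos hx, Real.rpow_def_of_pos hy, Real.rpow_def_of_pos hx,
    Real.rpow_def_of_pos hy, Real.cosh_eq]
  ring_nf
  simp only [← Real.exp_add]
  ring_nf

lemma point_hell {x y : ℝ} (hx : 0 < x) (hy : 0 < y) :
    (Real.sqrt x - Real.sqrt y) ^ 2
      = 2 * Real.sqrt (x * y) * Real.cosh (|Real.log (x / y)| / 2) - 2 * Real.sqrt (x * y) := by
  have h := point_mom hx hy 1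
  simp only [Real.rpow_one, sub_self, Real.rpow_zero, mul_one] at h
  have hxy : Real.sqrt x * Real.sqrt y = Real.sqrt (x * y) := (Real.sqrt_mul hx.le y).symm
  have hx2 : Real.sqrt x ^ 2 = x := Real.sq_sqrt hx.le
  have hy2 : Real.sqrt y ^ 2 = y := Real.sq_sqrt hy.le
  rw [show (2:ℝ) - 1 = 1 by norm_num, one_mul] at h
  nlinarith [h]

lemma point_log {x y : ℝ} (hx : 0 < x) (hy : 0 < y) :
    x * Real.log (x / y) + y * Real.log (y / x)
      = 8 * Real.sqrt (x * y) *
        ((|Real.log (x / y)| / 2) * Real.sinh (|Real.log (x / y)| / 2) / 2) := by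
  have hL : Real.log (x / y) = Real.log x - Real.log y := Real.log_div hx.ne' hy.ne'
  have hL' : Real.log (y / x) = -Real.log (x / y) := by
    rw [Real.log_div hy.ne' hx.ne', hL]; ring
  have habs : (|Real.log (x / y)| / 2) * Real.sinh (|Real.log (x / y)| / 2)
      = (Real.log (x / y) / 2) * Real.sinh (Real.log (x / y) / 2) := by
    rcases abs_cases (Real.log (x / y)) with ⟨h, _⟩ | ⟨h, _⟩
    · rw [h]
    · rw [h, show -Real.log (x / y) / 2 = -(Real.log (x / y) / 2) by ring, Real.sinh_neg]; ring
  have hdiff : x - y = 2 * Real.sqrt (x * y) * Real.sinh (Real.log (x / y) / 2) := by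
    rw [hL, Real.sqrt_mul hx.le, sqrt_eq_exp_real hx, sqrt_eq_exp_real hy, Real.sinh_eq]
    conv_lhs => rw [← Real.exp_log hx, ← Real.exp_log hy]
    ring_nf
    simp only [← Real.exp_add]
    ring_nf
  rw [habs, hL']
  linear_combination Real.log (x / y) * hdiff

section main

variable {ι : Type*} {p q : ι → ℝ}

lemma summable_M (hp : ∀ i, 0 < p i) (hq : ∀ i, 0 < q i)
    (hmom : ∀ s : ℝ, Summable (fun i => p i ^ s * q i ^ (1 - s))) (γ : ℝ) :
    Summable (fun i =>
      2 * Real.sqrt (p i * q i) * Real.cosh (γ * (|Real.log (p i / q i)| / 2))) := by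
  have h1 := hmom ((γ + 1) / 2)
  have h2 := hmom (1 - (γ + 1) / 2)
  have key : (fun i =>
      2 * Real.sqrt (p i * q i) * Real.cosh (γ * (|Real.log (p i / q i)| / 2)))
      = fun i => p i ^ ((γ + 1) / 2) * q i ^ (1 - (γ + 1) / 2)
          + q i ^ ((γ + 1) / 2) * p i ^ (1 - (γ + 1) / 2) := by
    funext i
    rw [point_mom (hp i) (hq i) ((γ + 1) / 2),
      show 2 * ((γ + 1) / 2) - 1 = γ by ring]
  rw [key]
  refine h1.add ?_
  have e : (fun i => q i ^ ((γ + 1) / 2) * p i ^ (1 - (γ + 1) / 2))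
      = fun i => p i ^ (1 - (γ + 1) / 2) * q i ^ (1 - (1 - (γ + 1) / 2)) := by
    funext i
    rw [show 1 - (1 - (γ + 1) / 2) = (γ + 1) / 2 by ring, mul_comm]
  rw [e]
  exact h2

lemma summable_base (hp : ∀ i, 0 < p i) (hq : ∀ i, 0 < q i)
    (hmom : ∀ s : ℝ, Summable (fun i => p i ^ s * q i ^ (1 - s))) :
    Summable (fun i => 2 * Real.sqrt (p i * q i)) := by
  have := summable_M hp hq hmom 0
  simpa using this

lemma summable_cosh1 (hp : ∀ i, 0 < p i) (hq : ∀ i, 0 < q i)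
    (hmom : ∀ s : ℝ, Summable (fun i => p i ^ s * q i ^ (1 - s))) :
    Summable (fun i =>
      2 * Real.sqrt (p i * q i) * Real.cosh (|Real.log (p i / q i)| / 2)) := by
  have := summable_M hp hq hmom 1
  simpa using this

lemma summable_cg (hp : ∀ i, 0 < p i) (hq : ∀ i, 0 < q i)
    (hmom : ∀ s : ℝ, Summable (fun i => p i ^ s * q i ^ (1 - s)))
    (hpq : Summable (fun i => p i * Real.log (p i / q i)))
    (hqp : Summable (fun i => q i * Real.log (q i / p i))) (γ : ℝ) :
    Summable (fun i =>
      8 * Real.sqrt (p i * q i) * gInt γ (|Real.log (p i / q i)| / 2)) := by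
  have hc1 := summable_cosh1 hp hq hmom
  have hb := summable_base hp hq hmom
  by_cases hγ : γ ^ 2 = 1
  · have hcase : γ = 1 ∨ γ = -1 := by
      have h0 : (γ - 1) * (γ + 1) = 0 := by nlinarith
      rcases mul_eq_zero.1 h0 with h | h
      · exact Or.inl (by linarith)
      · exact Or.inr (by linarith)
    have hgi : ∀ T : ℝ, gInt γ T = gInt 1 T := by
      intro T
      rcases hcase with h | h
      · rw [h]
      · rw [h, show (-1 : ℝ) = -(1:ℝ) by norm_num, gInt_neg]
    have key : (fun i => 8 * Real.sqrt (p i * q i) * gInt γ (|Real.log (p i / q i)| / 2))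
        = fun i => (p i * Real.log (p i / q i) + q i * Real.log (q i / p i))
            - 4 * (2 * Real.sqrt (p i * q i) * Real.cosh (|Real.log (p i / q i)| / 2))
            + 4 * (2 * Real.sqrt (p i * q i)) := by
      funext i
      rw [hgi, gInt_one, point_log (hp i) (hq i)]
      ring
    rw [key]
    exact ((hpq.add hqp).sub (hc1.mul_left 4)).add (hb.mul_left 4)
  · have hM := summable_M hp hq hmom γ
    have key : (fun i => 8 * Real.sqrt (p i * q i) * gInt γ (|Real.log (p i / q i)| / 2))
        = fun i => (4 / (γ ^ 2 - 1)) *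
              (2 * Real.sqrt (p i * q i) * Real.cosh (γ * (|Real.log (p i / q i)| / 2)))
            - (4 / (γ ^ 2 - 1)) *
              (2 * Real.sqrt (p i * q i) * Real.cosh (|Real.log (p i / q i)| / 2))
            - 4 * (2 * Real.sqrt (p i * q i) * Real.cosh (|Real.log (p i / q i)| / 2))
            + 4 * (2 * Real.sqrt (p i * q i)) := by
      funext i
      rw [gInt_eq γ _ hγ]
      have hne : γ ^ 2 - 1 ≠ 0 := sub_ne_zero.2 hγ
      field_simp
      ring
    rw [key]
    exact (((hM.mul_left _).sub (hc1.mul_left _)).sub (hc1.mul_left 4)).add (hb.mul_left 4)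

lemma symS_rep (hp : ∀ i, 0 < p i) (hq : ∀ i, 0 < q i)
    (hp1 : ∑' i, p i = 1) (hq1 : ∑' i, q i = 1)
    (hmom : ∀ s : ℝ, Summable (fun i => p i ^ s * q i ^ (1 - s)))
    (hpq : Summable (fun i => p i * Real.log (p i / q i)))
    (hqp : Summable (fun i => q i * Real.log (q i / p i))) (a : ℝ) :
    symS p q a
      = ∑' i, 8 * Real.sqrt (p i * q i) * gInt (2 * a - 1) (|Real.log (p i / q i)| / 2) := by
  have hc1 := summable_cosh1 hp hq hmom
  have hb := summable_base hp hq hmom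
  have hsum4 : Summable (fun i => 4 * (2 * Real.sqrt (p i * q i) *
      Real.cosh (|Real.log (p i / q i)| / 2) - 2 * Real.sqrt (p i * q i))) :=
    (hc1.sub hb).mul_left 4
  have hH : 4 * hellingerSq p q = ∑' i, 4 * (2 * Real.sqrt (p i * q i) *
      Real.cosh (|Real.log (p i / q i)| / 2) - 2 * Real.sqrt (p i * q i)) := by
    rw [hellingerSq, tsum_congr (fun i => point_hell (hp i) (hq i)), ← tsum_mul_left]
  have hppq : ∀ i, p i + q i
      = 2 * Real.sqrt (p i * q i) * Real.cosh (|Real.log (p i / q i)| / 2) := by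
    intro i
    have h := point_mom (hp i) (hq i) 1
    simp only [Real.rpow_one, sub_self, Real.rpow_zero, mul_one] at h
    rw [show (2:ℝ) - 1 = 1 by norm_num, one_mul] at h
    exact h
  rcases eq_or_ne a 1 with rfl | ha1
  · rw [symS, relDiv, relDiv, if_neg one_ne_zero, if_pos rfl, if_neg one_ne_zero, if_pos rfl]
    rw [← Summable.tsum_add hpq hqp, hH, ← Summable.tsum_sub (hpq.add hqp) hsum4]
    apply tsum_congr; intro i
    rw [show 2 * (1:ℝ) - 1 = 1 by norm_num, gInt_one]
    linear_combination point_log (hp i) (hq i)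
  rcases eq_or_ne a 0 with rfl | ha0
  · rw [symS, relDiv, relDiv, if_pos rfl, if_pos rfl]
    rw [← Summable.tsum_add hqp hpq, hH, ← Summable.tsum_sub (hqp.add hpq) hsum4]
    apply tsum_congr; intro i
    rw [show 2 * (0:ℝ) - 1 = -1 by norm_num, show (-1 : ℝ) = -(1:ℝ) by norm_num, gInt_neg,
      gInt_one]
    linear_combination point_log (hp i) (hq i)
  · have hD : a * (a - 1) ≠ 0 := mul_ne_zero ha0 (sub_ne_zero.2 ha1)
    have hα : (2 * a - 1) ^ 2 ≠ 1 := by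
      intro h
      exact hD (by linear_combination h / 4)
    have hA := hmom a
    have hB' : Summable (fun i => q i ^ a * p i ^ (1 - a)) := by
      have h2 := hmom (1 - a)
      have e : (fun i => q i ^ a * p i ^ (1 - a))
          = fun i => p i ^ (1 - a) * q i ^ (1 - (1 - a)) := by
        funext i
        rw [show 1 - (1 - a) = a by ring, mul_comm]
      rw [e]
      exact h2
    have hsp : Summable p := by simpa using hmom 1
    have hsq' : Summable q := by simpa using hmom 0
    rw [symS, relDiv, relDiv, if_neg ha0, if_neg ha1, if_neg ha0, if_neg ha1, ← add_div]
    have e1 : (∑' i, p i ^ a * q i ^ (1 - a)) - 1 + ((∑' i, q i ^ a * p i ^ (1 - a)) - 1)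
        = ∑' i, (p i ^ a * q i ^ (1 - a) + q i ^ a * p i ^ (1 - a) - (p i + q i)) := by
      rw [Summable.tsum_sub (hA.add hB') (hsp.add hsq'), Summable.tsum_add hA hB', Summable.tsum_add hsp hsq', hp1, hq1]
      ring
    rw [e1, hH, ← tsum_div_const, ← Summable.tsum_sub (((hA.add hB').sub (hsp.add hsq')).div_const _) hsum4]
    apply tsum_congr; intro i
    rw [point_mom (hp i) (hq i) a, hppq i, gInt_eq _ _ hα]
    have hne : (2 * a - 1) ^ 2 - 1 ≠ 0 := sub_ne_zero.2 hα
    field_simp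
    ring

lemma summable_sqrt_mul {f g : ι → ℝ} (hf : Summable f) (hg : Summable g)
    (hf0 : ∀ i, 0 ≤ f i) (hg0 : ∀ i, 0 ≤ g i) :
    Summable (fun i => Real.sqrt (f i) * Real.sqrt (g i)) := by
  refine Summable.of_nonneg_of_le (fun i => by positivity) (fun i => ?_)
    ((hf.add hg).div_const 2)
  have h1 := Real.sq_sqrt (hf0 i)
  have h2 := Real.sq_sqrt (hg0 i)
  nlinarith [sq_nonneg (Real.sqrt (f i) - Real.sqrt (g i))]

lemma tsum_cs {f g : ι → ℝ} (hf : Summable f) (hg : Summable g)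
    (hf0 : ∀ i, 0 ≤ f i) (hg0 : ∀ i, 0 ≤ g i) :
    ∑' i, Real.sqrt (f i) * Real.sqrt (g i) ≤ Real.sqrt ((∑' i, f i) * (∑' i, g i)) := by
  apply Summable.tsum_le_of_sum_le (summable_sqrt_mul hf hg hf0 hg0)
  intro F
  have h1 : (∑ i ∈ F, Real.sqrt (f i) * Real.sqrt (g i)) ^ 2 ≤ (∑ i ∈ F, f i) * ∑ i ∈ F, g i :=
    Finset.sum_sq_le_sum_mul_sum_of_sq_eq_mul F (fun i _ => hf0 i) (fun i _ => hg0 i)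
      (fun i _ => by rw [mul_pow, Real.sq_sqrt (hf0 i), Real.sq_sqrt (hg0 i)])
  have h2 : (∑ i ∈ F, f i) * (∑ i ∈ F, g i) ≤ (∑' i, f i) * (∑' i, g i) :=
    mul_le_mul (Summable.sum_le_tsum F (fun i _ => hf0 i) hf) (Summable.sum_le_tsum F (fun i _ => hg0 i) hg)
      (Finset.sum_nonneg fun i _ => hg0 i) (tsum_nonneg hf0)
  calc ∑ i ∈ F, Real.sqrt (f i) * Real.sqrt (g i)
      = Real.sqrt ((∑ i ∈ F, Real.sqrt (f i) * Real.sqrt (g i)) ^ 2) := by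
        rw [Real.sqrt_sq (Finset.sum_nonneg fun i _ => by positivity)]
    _ ≤ _ := Real.sqrt_le_sqrt (h1.trans h2)

lemma main_ineq (hp : ∀ i, 0 < p i) (hq : ∀ i, 0 < q i)
    (hmom : ∀ s : ℝ, Summable (fun i => p i ^ s * q i ^ (1 - s)))
    (hpq : Summable (fun i => p i * Real.log (p i / q i)))
    (hqp : Summable (fun i => q i * Real.log (q i / p i))) (α β : ℝ) :
    |(∑' i, 8 * Real.sqrt (p i * q i) * gInt α (|Real.log (p i / q i)| / 2))
        - ∑' i, 8 * Real.sqrt (p i * q i) * gInt β (|Real.log (p i / q i)| / 2)|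
      ≤ Real.sqrt
          ((∑' i, 8 * Real.sqrt (p i * q i) * gInt (α + β) (|Real.log (p i / q i)| / 2))
            * ∑' i, 8 * Real.sqrt (p i * q i) * gInt (α - β) (|Real.log (p i / q i)| / 2)) := by
  have hT0 : ∀ i, 0 ≤ |Real.log (p i / q i)| / 2 := fun i => by positivity
  have hga := summable_cg hp hq hmom hpq hqp α
  have hgb := summable_cg hp hq hmom hpq hqp β
  have hgA := summable_cg hp hq hmom hpq hqp (α + β)
  have hgB := summable_cg hp hq hmom hpq hqp (α - β)
  have hA0 : ∀ i, 0 ≤ 8 * Real.sqrt (p i * q i) * gInt (α + β) (|Real.log (p i / q i)| / 2) :=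
    fun i => mul_nonneg (by positivity) (gInt_nonneg _ (hT0 i))
  have hB0 : ∀ i, 0 ≤ 8 * Real.sqrt (p i * q i) * gInt (α - β) (|Real.log (p i / q i)| / 2) :=
    fun i => mul_nonneg (by positivity) (gInt_nonneg _ (hT0 i))
  have hper : ∀ i,
      |8 * Real.sqrt (p i * q i) * gInt α (|Real.log (p i / q i)| / 2)
        - 8 * Real.sqrt (p i * q i) * gInt β (|Real.log (p i / q i)| / 2)|
      ≤ Real.sqrt (8 * Real.sqrt (p i * q i) * gInt (α + β) (|Real.log (p i / q i)| / 2))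
        * Real.sqrt (8 * Real.sqrt (p i * q i) * gInt (α - β) (|Real.log (p i / q i)| / 2)) := by
    intro i
    have hc0 : (0:ℝ) ≤ 8 * Real.sqrt (p i * q i) := by positivity
    have h := gInt_cs α β (hT0 i)
    calc |8 * Real.sqrt (p i * q i) * gInt α (|Real.log (p i / q i)| / 2)
          - 8 * Real.sqrt (p i * q i) * gInt β (|Real.log (p i / q i)| / 2)|
        = 8 * Real.sqrt (p i * q i)
            * |gInt α (|Real.log (p i / q i)| / 2) - gInt β (|Real.log (p i / q i)| / 2)| := by
          rw [← mul_sub, abs_mul, abs_of_nonneg hc0]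
      _ ≤ 8 * Real.sqrt (p i * q i)
            * (Real.sqrt (gInt (α + β) (|Real.log (p i / q i)| / 2))
              * Real.sqrt (gInt (α - β) (|Real.log (p i / q i)| / 2))) :=
          mul_le_mul_of_nonneg_left h hc0
      _ = _ := by
          rw [Real.sqrt_mul hc0, Real.sqrt_mul hc0]
          have hself := Real.mul_self_sqrt hc0
          linear_combination (-(Real.sqrt (gInt (α + β) (|Real.log (p i / q i)| / 2))
            * Real.sqrt (gInt (α - β) (|Real.log (p i / q i)| / 2)))) * hself
  rw [← Summable.tsum_sub hga hgb]
  have habs : Summable (fun i =>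
      |8 * Real.sqrt (p i * q i) * gInt α (|Real.log (p i / q i)| / 2)
        - 8 * Real.sqrt (p i * q i) * gInt β (|Real.log (p i / q i)| / 2)|) :=
    (hga.sub hgb).abs
  calc |∑' i, (8 * Real.sqrt (p i * q i) * gInt α (|Real.log (p i / q i)| / 2)
          - 8 * Real.sqrt (p i * q i) * gInt β (|Real.log (p i / q i)| / 2))|
      ≤ ∑' i, |8 * Real.sqrt (p i * q i) * gInt α (|Real.log (p i / q i)| / 2)
          - 8 * Real.sqrt (p i * q i) * gInt β (|Real.log (p i / q i)| / 2)| := by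
        have habs' : Summable (fun i =>
            ‖8 * Real.sqrt (p i * q i) * gInt α (|Real.log (p i / q i)| / 2)
              - 8 * Real.sqrt (p i * q i) * gInt β (|Real.log (p i / q i)| / 2)‖) := by
          simpa only [Real.norm_eq_abs] using habs
        have hstep := norm_tsum_le_tsum_norm habs'
        simpa only [Real.norm_eq_abs] using hstep
    _ ≤ ∑' i, Real.sqrt (8 * Real.sqrt (p i * q i) * gInt (α + β) (|Real.log (p i / q i)| / 2))
          * Real.sqrt (8 * Real.sqrt (p i * q i) * gInt (α - β) (|Real.log (p i / q i)| / 2)) :=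
        Summable.tsum_le_tsum hper habs (summable_sqrt_mul hgA hgB hA0 hB0)
    _ ≤ _ := tsum_cs hgA hgB hA0 hB0

end main

theorem theorem8_first {ι : Type*} [Countable ι] (p q : ι → ℝ)
    (hp : ∀ i, 0 < p i) (hq : ∀ i, 0 < q i)
    (hp1 : ∑' i, p i = 1) (hq1 : ∑' i, q i = 1)
    (hmom : ∀ s : ℝ, Summable (fun i => p i ^ s * q i ^ (1 - s)))
    (hpq : Summable (fun i => p i * Real.log (p i / q i)))
    (hqp : Summable (fun i => q i * Real.log (q i / p i)))
    (a b : ℝ) :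
    |symS p q a - symS p q b| ≤
      Real.sqrt (symS p q (a + b - 1 / 2) * symS p q (a - b + 1 / 2)) := by
  have key := symS_rep hp hq hp1 hq1 hmom hpq hqp
  rw [key a, key b, key (a + b - 1 / 2), key (a - b + 1 / 2),
    show 2 * (a + b - 1 / 2) - 1 = (2 * a - 1) + (2 * b - 1) by ring,
    show 2 * (a - b + 1 / 2) - 1 = (2 * a - 1) - (2 * b - 1) by ring]
  exact main_ineq hp hq hmom hpq hqp (2 * a - 1) (2 * b - 1)
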